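/- Let m be a positive natural number and s : Fin m → ℝ with s i > 0 for all i. Define, for a weight function w : Fin m → ℝ, N_S(w) as the minimum cardinality of a subset K ⊆ Fin m such that ∑_{i ∈ K} w i ≥ (2/3) · ∑_i w i. Then N_S(fun i => Real.sqrt (s i)) ≥ N_S(s); that is, the Nakamoto coefficient for safety under the Square Root Stake Weight model is at least that under the linear stake-weight model. -/
import Mathlib


open Finset

/-- The Nakamoto coefficient for safety of a weight function `w` on `m` validators:
the minimum cardinality of a subset of validators whose cumulative weight is at least
two-thirds of the total weight. -/
noncomputable def nakamotoSafety (m : ℕ) (w : Fin m → ℝ) : ℕ :=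
  sInf {n : ℕ | ∃ K : Finset (Fin m), K.card = n ∧ (2 / 3 : ℝ) * ∑ i, w i ≤ ∑ i ∈ K, w i}

/-- If `K'` contains only elements whose weight dominates all outside weights, then among
sets of the same cardinality it maximizes the weight sum. -/
lemma topset_sum_max {ι : Type*} [Fintype ι] [DecidableEq ι] (a : ι → ℝ)
    (K K' : Finset ι) (hcard : K.card = K'.card)
    (htop : ∀ i ∈ K', ∀ j ∉ K', a j ≤ a i) :
    ∑ i ∈ K, a i ≤ ∑ i ∈ K', a i := by
  have hdiffcard : (K \ K').card = (K' \ K).card := Finset.card_sdiff_comm hcard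
  have hcross : ∀ i ∈ K \ K', ∀ j ∈ K' \ K, a i ≤ a j := by
    intro i hi j hj
    exact htop j (Finset.mem_sdiff.mp hj).1 i (Finset.mem_sdiff.mp hi).2
  have hdsum : ∑ i ∈ K \ K', a i ≤ ∑ i ∈ K' \ K, a i := by
    rcases Finset.eq_empty_or_nonempty (K' \ K) with h | h
    · have : K \ K' = ∅ := Finset.card_eq_zero.mp (by rw [hdiffcard, h]; simp)
      simp [this, h]
    · set c := (K' \ K).inf' h a with hc
      have h1 : ∑ i ∈ K \ K', a i ≤ (K \ K').card • c := by
        apply Finset.sum_le_card_nsmul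
        intro i hi
        rw [hc, Finset.le_inf'_iff]
        intro j hj
        exact hcross i hi j hj
      have h2 : (K' \ K).card • c ≤ ∑ i ∈ K' \ K, a i := by
        apply Finset.card_nsmul_le_sum
        intro j hj
        exact Finset.inf'_le a hj
      calc ∑ i ∈ K \ K', a i ≤ (K \ K').card • c := h1
        _ = (K' \ K).card • c := by rw [hdiffcard]
        _ ≤ ∑ i ∈ K' \ K, a i := h2
  have e1 := Finset.sum_inter_add_sum_sdiff K K' a
  have e2 := Finset.sum_inter_add_sum_sdiff K' K a
  have : K ∩ K' = K' ∩ K := Finset.inter_comm K K'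
  linarith [e1, e2, hdsum, this ▸ e1]

/-- Chebyshev-type inequality: if `A` is a top set for `a`, then
`(∑_A a²)(∑ a) ≥ (∑_A a)(∑ a²)`. -/
lemma top_cheby {ι : Type*} [Fintype ι] [DecidableEq ι] (a : ι → ℝ)
    (ha : ∀ i, 0 ≤ a i) (A : Finset ι)
    (htop : ∀ i ∈ A, ∀ j ∉ A, a j ≤ a i) :
    (∑ i ∈ A, a i) * (∑ i, (a i) ^ 2) ≤ (∑ i ∈ A, (a i) ^ 2) * (∑ i, a i) := by
  set f : ι → ι → ℝ := fun i j => a i ^ 2 * a j - a i * a j ^ 2 with hf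
  have key : (∑ i ∈ A, (a i) ^ 2) * (∑ i, a i) - (∑ i ∈ A, a i) * (∑ i, (a i) ^ 2)
      = ∑ i ∈ A, ∑ j, f i j := by
    rw [Finset.sum_mul, Finset.sum_mul]
    rw [← Finset.sum_sub_distrib]
    congr 1; funext i
    rw [Finset.mul_sum, Finset.mul_sum, ← Finset.sum_sub_distrib]
  have split : ∑ i ∈ A, ∑ j, f i j
      = (∑ i ∈ A, ∑ j ∈ A, f i j) + (∑ i ∈ A, ∑ j ∈ Aᶜ, f i j) := by
    rw [← Finset.sum_add_distrib]
    congr 1; funext i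
    rw [Finset.sum_add_sum_compl]
  have anti : ∑ i ∈ A, ∑ j ∈ A, f i j = 0 := by
    have h1 : ∑ i ∈ A, ∑ j ∈ A, f i j = ∑ i ∈ A, ∑ j ∈ A, f j i := Finset.sum_comm
    have h2 : ∑ i ∈ A, ∑ j ∈ A, (f i j + f j i) = 0 := by
      apply Finset.sum_eq_zero; intro i _
      apply Finset.sum_eq_zero; intro j _
      simp only [hf]; ring
    have h3 : ∑ i ∈ A, ∑ j ∈ A, (f i j + f j i)
        = (∑ i ∈ A, ∑ j ∈ A, f i j) + (∑ i ∈ A, ∑ j ∈ A, f j i) := by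
      simp [Finset.sum_add_distrib]
    linarith [h1, h2, h3]
  have pos : 0 ≤ ∑ i ∈ A, ∑ j ∈ Aᶜ, f i j := by
    apply Finset.sum_nonneg
    intro i hi
    apply Finset.sum_nonneg
    intro j hj
    have hji : a j ≤ a i := htop i hi j (Finset.mem_compl.mp hj)
    have : f i j = a i * a j * (a i - a j) := by simp [hf]; ring
    rw [this]
    exact mul_nonneg (mul_nonneg (ha i) (ha j)) (sub_nonneg.mpr hji)
  nlinarith [key, split ▸ key, anti, pos]

/-- Lemma 1 (safety half): the Nakamoto coefficient for safety under the
Square Root Stake Weight model is at least that under the linear stake-weight model. -/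
theorem srsw_nakamoto_safety_ge (m : ℕ) (hm : 0 < m) (s : Fin m → ℝ)
    (hs : ∀ i, 0 < s i) :
    nakamotoSafety m s ≤ nakamotoSafety m (fun i => Real.sqrt (s i)) := by
  classical
  set a : Fin m → ℝ := fun i => Real.sqrt (s i) with haa
  have ha0 : ∀ i, 0 < a i := fun i => Real.sqrt_pos.mpr (hs i)
  set Ssq : Set ℕ := {n : ℕ | ∃ K : Finset (Fin m), K.card = n ∧
    (2 / 3 : ℝ) * ∑ i, a i ≤ ∑ i ∈ K, a i} with hSsq
  have hne : Ssq.Nonempty := by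
    refine ⟨m, Finset.univ, by simp, ?_⟩
    have h1 : (0:ℝ) ≤ ∑ i, a i := Finset.sum_nonneg fun i _ => (ha0 i).le
    nlinarith
  have hmem : nakamotoSafety m a ∈ Ssq := Nat.sInf_mem hne
  obtain ⟨K, hKcard, hKquorum⟩ := hmem
  set n := nakamotoSafety m a with hn
  have hnm : n ≤ m := by
    rw [← hKcard]
    simpa using Finset.card_le_card (Finset.subset_univ K)
  -- sort: σ with s ∘ σ antitone
  set σ := Tuple.sort (fun i => -(s i)) with hσ
  have hanti : ∀ i j : Fin m, i ≤ j → s (σ j) ≤ s (σ i) := by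
    intro i j hij
    have := Tuple.monotone_sort (fun i => -(s i)) hij
    simp only [Function.comp_apply] at this
    linarith
  -- the top-n set
  set B : Finset (Fin m) := Finset.attachFin (Finset.range n)
    (fun x hx => lt_of_lt_of_le (Finset.mem_range.mp hx) hnm) with hB
  have hBmem : ∀ i : Fin m, i ∈ B ↔ (i : ℕ) < n := by
    intro i; simp [hB, Finset.mem_attachFin]
  set K' : Finset (Fin m) := B.image σ with hK'
  have hK'card : K'.card = n := by
    rw [hK', Finset.card_image_of_injective _ σ.injective, hB, Finset.card_attachFin,
      Finset.card_range]
  have htop : ∀ i ∈ K', ∀ j ∉ K', s j ≤ s i := by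
    intro i hi j hj
    obtain ⟨b, hb, rfl⟩ := Finset.mem_image.mp hi
    have hbn : (b : ℕ) < n := (hBmem b).mp hb
    have hj' : ¬ ((σ.symm j : ℕ) < n) := by
      intro h
      apply hj
      exact Finset.mem_image.mpr ⟨σ.symm j, (hBmem _).mpr h, by simp⟩
    have hble : b ≤ σ.symm j := by
      have : (b : ℕ) ≤ (σ.symm j : ℕ) := le_trans hbn.le (not_lt.mp hj')
      exact Fin.le_def.mpr this
    have := hanti b (σ.symm j) hble
    simpa using this
  have htopa : ∀ i ∈ K', ∀ j ∉ K', a j ≤ a i := by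
    intro i hi j hj
    exact Real.sqrt_le_sqrt (htop i hi j hj)
  -- K' also achieves sqrt quorum
  have hK'quorum : (2 / 3 : ℝ) * ∑ i, a i ≤ ∑ i ∈ K', a i := by
    refine le_trans hKquorum ?_
    exact topset_sum_max a K K' (hKcard.trans hK'card.symm) htopa
  -- Chebyshev: K' achieves linear quorum
  have hsa : ∀ i, s i = a i ^ 2 := fun i => (Real.sq_sqrt (hs i).le).symm
  have hquorum_s : (2 / 3 : ℝ) * ∑ i, s i ≤ ∑ i ∈ K', s i := by
    have hch := top_cheby a (fun i => (ha0 i).le) K' htopa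
    have hTa : (0:ℝ) < ∑ i, a i := by
      have : ∃ i : Fin m, True := ⟨⟨0, hm⟩, trivial⟩
      obtain ⟨i0, _⟩ := this
      exact Finset.sum_pos (fun i _ => ha0 i) ⟨i0, Finset.mem_univ i0⟩
    have hTsq : (0:ℝ) ≤ ∑ i, a i ^ 2 := Finset.sum_nonneg fun i _ => sq_nonneg _
    have key : (2 / 3 : ℝ) * (∑ i, a i ^ 2) * (∑ i, a i) ≤
        (∑ i ∈ K', a i ^ 2) * (∑ i, a i) := by
      calc (2 / 3 : ℝ) * (∑ i, a i ^ 2) * (∑ i, a i)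
          = ((2 / 3 : ℝ) * ∑ i, a i) * (∑ i, a i ^ 2) := by ring
        _ ≤ (∑ i ∈ K', a i) * (∑ i, a i ^ 2) := by
            exact mul_le_mul_of_nonneg_right hK'quorum hTsq
        _ ≤ (∑ i ∈ K', a i ^ 2) * (∑ i, a i) := hch
    have key2 : (2 / 3 : ℝ) * (∑ i, a i ^ 2) ≤ ∑ i ∈ K', a i ^ 2 :=
      le_of_mul_le_mul_right (by linarith [key]) hTa
    calc (2 / 3 : ℝ) * ∑ i, s i = (2 / 3 : ℝ) * ∑ i, a i ^ 2 := by
          congr 1; exact Finset.sum_congr rfl fun i _ => hsa i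
      _ ≤ ∑ i ∈ K', a i ^ 2 := key2
      _ = ∑ i ∈ K', s i := Finset.sum_congr rfl fun i _ => (hsa i).symm
  exact Nat.sInf_le ⟨K', hK'card, hquorum_s⟩
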